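/- Connection between Al-Salam–Chihara and big q-Hermite polynomials: for all n ≥ 0 and all x, a, b, q, Q_n(x|a,b,q) = ∑_{j=0}^{n} [n choose j]_q (-1)^j b^j q^{j(j-1)/2} h_{n-j}(x|a,q). -/

import Mathlib

/-- The Gaussian (q-)binomial coefficient, defined via the q-Pascal rule. -/
def gaussBinom (q : ℂ) : ℕ → ℕ → ℂ
  | _, 0 => 1
  | 0, _ + 1 => 0
  | n + 1, k + 1 => gaussBinom q n k + q ^ (k + 1) * gaussBinom q n (k + 1)

/-- The big continuous q-Hermite polynomials. -/
def bigQHermite (q a x : ℂ) : ℕ → ℂ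
  | 0 => 1
  | 1 => 2 * x - a
  | n + 2 => (2 * x - a * q ^ (n + 1)) * bigQHermite q a x (n + 1)
      - (1 - q ^ (n + 1)) * bigQHermite q a x n

/-- The Al-Salam–Chihara polynomials. -/
def alSalamChihara (q a b x : ℂ) : ℕ → ℂ
  | 0 => 1
  | 1 => 2 * x - (a + b)
  | n + 2 => (2 * x - (a + b) * q ^ (n + 1)) * alSalamChihara q a b x (n + 1)
      - (1 - a * b * q ^ n) * (1 - q ^ (n + 1)) * alSalamChihara q a b x n

lemma gaussBinom_zero (q : ℂ) (n : ℕ) : gaussBinom q n 0 = 1 := by cases n <;> rfl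

lemma gaussBinom_succ (q : ℂ) (n k : ℕ) :
    gaussBinom q (n+1) (k+1) = gaussBinom q n k + q ^ (k + 1) * gaussBinom q n (k + 1) := rfl

lemma gaussBinom_eq_zero (q : ℂ) : ∀ n k, n < k → gaussBinom q n k = 0 := by
  intro n
  induction n with
  | zero => intro k hk; match k, hk with | k+1, _ => rfl
  | succ n ih =>
    intro k hk
    match k, hk with
    | k+1, hk =>
      rw [gaussBinom_succ, ih k (by omega), ih (k+1) (by omega)]; ring

/-- absorption within a row: `(1-q^{k+1}) [n,k+1] = (1-q^{n-k}) [n,k]` -/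
lemma gaussBinom_absorb (q : ℂ) : ∀ n k,
    (1 - q^(k+1)) * gaussBinom q n (k+1) = (1 - q^(n-k)) * gaussBinom q n k := by
  intro n
  induction n with
  | zero =>
    intro k
    have h0 : (0:ℕ) - k = 0 := by omega
    show (1 - q^(k+1)) * (0:ℂ) = _
    rw [h0]; simp
  | succ n ih =>
    intro k
    rw [gaussBinom_succ]
    cases k with
    | zero =>
      simp only [Nat.sub_zero, gaussBinom_zero, zero_add, pow_one]
      have h := ih 0
      simp only [Nat.sub_zero, gaussBinom_zero, zero_add, pow_one, mul_one] at h
      linear_combination q * h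
    | succ m =>
      have hP : (1 - q^(m+1+1)) * gaussBinom q n (m+1+1) = (1 - q^(n-(m+1))) * gaussBinom q n (m+1) := ih (m+1)
      have hP2 : (1 - q^(m+1)) * gaussBinom q n (m+1) = (1 - q^(n-m)) * gaussBinom q n m := ih m
      rw [gaussBinom_succ]
      rcases le_or_gt (m+1) n with hk | hk
      · have e3 : n + 1 - (m+1) = n - m := by omega
        rw [e3]
        have key1 : q^(n-(m+1)) * q^(m+2) = q^(n+1) := by rw [← pow_add]; congr 1; omega
        have key2 : q^(n-m) * q^(m+1) = q^(n+1) := by rw [← pow_add]; congr 1; omega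
        linear_combination q^(m+2) * hP + hP2 + gaussBinom q n (m+1) * key2 - gaussBinom q n (m+1) * key1
      · rw [gaussBinom_eq_zero q n (m+1) (by omega), gaussBinom_eq_zero q n (m+2) (by omega)]
        have e3 : n + 1 - (m+1) = 0 := by omega
        rw [e3]
        ring

/-- cross-row absorption: `(1-q^{k+1}) [n+1,k+1] = (1-q^{n+1}) [n,k]` -/
lemma gaussBinom_absorb' (q : ℂ) (n k : ℕ) :
    (1 - q^(k+1)) * gaussBinom q (n+1) (k+1) = (1 - q^(n+1)) * gaussBinom q n k := by
  rw [gaussBinom_succ]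
  rcases le_or_gt k n with hk | hk
  · have key : q^(k+1) * q^(n-k) = q^(n+1) := by rw [← pow_add]; congr 1; omega
    have h := gaussBinom_absorb q n k
    linear_combination q^(k+1) * h - gaussBinom q n k * key
  · rw [gaussBinom_eq_zero q n k hk, gaussBinom_eq_zero q n (k+1) (by omega)]
    ring

/-- the sign/power factor in the connection coefficients -/
def ascU (b q : ℂ) (j : ℕ) : ℂ := (-1)^j * b^j * q^(j*(j-1)/2)

lemma ascU_succ (b q : ℂ) (j : ℕ) : ascU b q (j+1) = -(b * q^j) * ascU b q j := by
  unfold ascU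
  have he : (j+1) * (j+1-1) / 2 = j*(j-1)/2 + j := by
    cases j with
    | zero => rfl
    | succ k =>
      have h2 : k+1+1-1 = k+1 := by omega
      have h3 : k+1-1 = k := by omega
      rw [h2, h3]
      rw [show (k+1+1)*(k+1) = (k+1)*k + (k+1)*2 from by ring,
        Nat.add_mul_div_right _ _ (by norm_num : 0 < 2)]
  rw [he, pow_add, pow_succ, pow_succ]
  ring

/-- the full connection coefficient (without the Hermite factor) -/
def ascC (b q : ℂ) (n j : ℕ) : ℂ := gaussBinom q n j * ascU b q j

lemma ascC_zero (b q : ℂ) (n : ℕ) : ascC b q n 0 = 1 := by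
  unfold ascC ascU
  rw [gaussBinom_zero]; norm_num

lemma ascC_eq_zero (b q : ℂ) {n j : ℕ} (h : n < j) : ascC b q n j = 0 := by
  unfold ascC
  rw [gaussBinom_eq_zero q n j h, zero_mul]

lemma ascC_pascal (b q : ℂ) (n k : ℕ) :
    ascC b q (n+1) (k+1) = -(b*q^k) * ascC b q n k + q^(k+1) * ascC b q n (k+1) := by
  unfold ascC
  rw [gaussBinom_succ, ascU_succ]
  ring

lemma asc_key (a b q : ℂ) (n j : ℕ) (hj : j ≤ n) :
    (q^(j+2)-1) * (gaussBinom q (n+1) (j+2) * ascU b q (j+2))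
  + (a*q^(n+1)+b*q^(n+1)-a*q^(n-j)-b*q^(j+1)) * (gaussBinom q (n+1) (j+1) * ascU b q (j+1))
  - (1-q^(n+1-j)) * (gaussBinom q (n+1) j * ascU b q j)
  = -((1-a*b*q^n)*(1-q^(n+1))) * (gaussBinom q n j * ascU b q j) := by
  have e0 : j + 2 = (j+1)+1 := rfl
  rw [e0, ascU_succ, ascU_succ]
  have e1 : n+1-j = (n-j)+1 := by omega
  rw [e1]
  have hE1 := gaussBinom_absorb q (n+1) (j+1)
  have e2 : n+1-(j+1) = n-j := by omega
  rw [e2] at hE1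
  have hE2 := gaussBinom_absorb' q n j
  have hE3 := gaussBinom_absorb q (n+1) j
  rw [e1] at hE3
  have hq : q^(n-j) * q^j = q^n := by rw [← pow_add]; congr 1; omega
  set U := ascU b q j with hU
  linear_combination (-(b^2*q^(2*j+1))*U)*hE1 + ((a*b*q^n - 1)*U)*hE2 + U*hE3
    + ((a*b + b^2*q^(j+1))*U*gaussBinom q (n+1) (j+1))*hq

lemma ascU_one (b q : ℂ) : ascU b q 1 = -b := by
  unfold ascU; norm_num

lemma asc_key' (a b q : ℂ) (n j : ℕ) (hj : j ≤ n) :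
    (1-q^(j+2)) * ascC b q (n+1) (j+2)
  + (a*q^(n-j) - a*q^(n+1) - b*q^(n+1) + b*q^(j+1)) * ascC b q (n+1) (j+1)
  + (1-q^(n+1-j)) * ascC b q (n+1) j
  = (1-a*b*q^n)*(1-q^(n+1)) * ascC b q n j := by
  have h := asc_key a b q n j hj
  unfold ascC
  linear_combination -h

lemma hermite_up (q a x : ℂ) (m : ℕ) :
    2*x*bigQHermite q a x m
      = bigQHermite q a x (m+1) + a*q^m*bigQHermite q a x m
        + (1-q^m)*bigQHermite q a x (m-1) := by
  cases m with
  | zero =>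
    show 2*x*1 = (2*x-a) + a*q^0*1 + (1-q^0)*bigQHermite q a x (0-1)
    ring
  | succ k =>
    show 2*x*bigQHermite q a x (k+1)
      = ((2*x - a*q^(k+1)) * bigQHermite q a x (k+1) - (1-q^(k+1)) * bigQHermite q a x k)
        + a*q^(k+1)*bigQHermite q a x (k+1) + (1-q^(k+1))*bigQHermite q a x k
    ring

/-- The heart of the induction: the candidate sum satisfies the ASC recurrence. -/
lemma key_step (x a b q : ℂ) (n : ℕ) :
    (2*x - (a+b)*q^(n+1)) * (∑ j ∈ Finset.range (n+2), ascC b q (n+1) j * bigQHermite q a x (n+1-j))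
      - (1 - a*b*q^n) * (1 - q^(n+1)) * (∑ j ∈ Finset.range (n+1), ascC b q n j * bigQHermite q a x (n-j))
    = ∑ j ∈ Finset.range (n+3), ascC b q (n+2) j * bigQHermite q a x (n+2-j) := by
  set H := bigQHermite q a x with hH
  -- Step 1: rewrite the RHS using the q-Pascal rule
  have h1 : ∑ j ∈ Finset.range (n+3), ascC b q (n+2) j * H (n+2-j)
      = ∑ j ∈ Finset.range (n+2), (q^j * ascC b q (n+1) j * H (n+2-j)
          - b * (q^j * ascC b q (n+1) j * H (n+1-j))) := by
    rw [show n+3 = (n+2)+1 from rfl,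
      Finset.sum_range_succ' (fun j => ascC b q (n+2) j * H (n+2-j)) (n+2)]
    have e : ∀ j ∈ Finset.range (n+2),
        ascC b q (n+2) (j+1) * H (n+2-(j+1))
          = (q^(j+1) * ascC b q (n+1) (j+1) * H (n+2-(j+1))
             - b * (q^j * ascC b q (n+1) j * H (n+1-j))) := by
      intro j hj
      rw [show n+2 = (n+1)+1 from rfl, ascC_pascal]
      have : n+1+1-(j+1) = n+1-j := by omega
      rw [this]
      ring
    rw [Finset.sum_congr rfl e, Finset.sum_sub_distrib]
    have h2 : ∑ j ∈ Finset.range (n+2), q^(j+1) * ascC b q (n+1) (j+1) * H (n+2-(j+1))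
        = ∑ j ∈ Finset.range (n+2), q^j * ascC b q (n+1) j * H (n+2-j)
          - q^0 * ascC b q (n+1) 0 * H (n+2-0) := by
      have h3 := Finset.sum_range_succ' (fun j => q^j * ascC b q (n+1) j * H (n+2-j)) (n+2)
      rw [show (n+2)+1 = n+3 from rfl] at h3
      have h4 := Finset.sum_range_succ (fun j => q^j * ascC b q (n+1) j * H (n+2-j)) (n+2)
      rw [show (n+2)+1 = n+3 from rfl] at h4
      rw [ascC_eq_zero b q (show n+1 < n+2 by omega)] at h4
      simp only [mul_zero, zero_mul, add_zero] at h4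
      linear_combination h4 - h3
    rw [h2]
    simp only [ascC_zero, pow_zero, one_mul, Nat.sub_zero, Finset.sum_sub_distrib]
    ring
  rw [h1]
  -- Step 2: expand 2x * S1 using the Hermite recurrence
  have h2 : (2*x) * (∑ j ∈ Finset.range (n+2), ascC b q (n+1) j * H (n+1-j))
      = ∑ j ∈ Finset.range (n+2), (ascC b q (n+1) j * H (n+2-j)
          + a*q^(n+1-j) * ascC b q (n+1) j * H (n+1-j)
          + (1-q^(n+1-j)) * ascC b q (n+1) j * H (n-j)) := by
    rw [Finset.mul_sum]
    refine Finset.sum_congr rfl (fun j hj => ?_)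
    have hjle : j ≤ n+1 := by simpa using Nat.lt_succ_iff.mp (by have := Finset.mem_range.mp hj; omega : j < n + 1 + 1)
    have hup := hermite_up q a x (n+1-j)
    rw [← hH] at hup
    have e1 : n+1-j+1 = n+2-j := by omega
    have e2 : n+1-j-1 = n-j := by omega
    rw [e1, e2] at hup
    calc 2*x * (ascC b q (n+1) j * H (n+1-j))
        = (2*x*H (n+1-j)) * ascC b q (n+1) j := by ring
      _ = (H (n+2-j) + a*q^(n+1-j)*H (n+1-j) + (1-q^(n+1-j))*H (n-j)) * ascC b q (n+1) j := by rw [hup]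
      _ = _ := by ring
  rw [sub_mul, h2]
  have hc := Finset.mul_sum (Finset.range (n+2)) (fun j => ascC b q (n+1) j * H (n+1-j))
    ((a+b)*q^(n+1))
  have hb := Finset.mul_sum (Finset.range (n+1)) (fun j => ascC b q n j * H (n-j))
    ((1-a*b*q^n)*(1-q^(n+1)))
  have hsplit : ∑ j ∈ Finset.range (n+2),
        ((1-q^j) * ascC b q (n+1) j * H (n+2-j)
          + (a*q^(n+1-j) - a*q^(n+1) - b*q^(n+1) + b*q^j) * ascC b q (n+1) j * H (n+1-j)
          + (1-q^(n+1-j)) * ascC b q (n+1) j * H (n-j))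
      = (∑ j ∈ Finset.range (n+2), (1-q^j) * ascC b q (n+1) j * H (n+2-j))
        + (∑ j ∈ Finset.range (n+2), (a*q^(n+1-j) - a*q^(n+1) - b*q^(n+1) + b*q^j) * ascC b q (n+1) j * H (n+1-j))
        + (∑ j ∈ Finset.range (n+2), (1-q^(n+1-j)) * ascC b q (n+1) j * H (n-j)) := by
    rw [Finset.sum_add_distrib, Finset.sum_add_distrib]
  have hper : ∑ j ∈ Finset.range (n+2),
        (ascC b q (n+1) j * H (n+2-j) + a*q^(n+1-j) * ascC b q (n+1) j * H (n+1-j)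
          + (1-q^(n+1-j)) * ascC b q (n+1) j * H (n-j)
          - (a+b)*q^(n+1) * (ascC b q (n+1) j * H (n+1-j))
          - (q^j * ascC b q (n+1) j * H (n+2-j) - b * (q^j * ascC b q (n+1) j * H (n+1-j))))
      = ∑ j ∈ Finset.range (n+2),
        ((1-q^j) * ascC b q (n+1) j * H (n+2-j)
          + (a*q^(n+1-j) - a*q^(n+1) - b*q^(n+1) + b*q^j) * ascC b q (n+1) j * H (n+1-j)
          + (1-q^(n+1-j)) * ascC b q (n+1) j * H (n-j)) := by
    refine Finset.sum_congr rfl (fun j hj => ?_); ring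
  have hper2 : ∑ j ∈ Finset.range (n+2),
        (ascC b q (n+1) j * H (n+2-j) + a*q^(n+1-j) * ascC b q (n+1) j * H (n+1-j)
          + (1-q^(n+1-j)) * ascC b q (n+1) j * H (n-j)
          - (a+b)*q^(n+1) * (ascC b q (n+1) j * H (n+1-j))
          - (q^j * ascC b q (n+1) j * H (n+2-j) - b * (q^j * ascC b q (n+1) j * H (n+1-j))))
      = (∑ j ∈ Finset.range (n+2),
          (ascC b q (n+1) j * H (n+2-j) + a*q^(n+1-j) * ascC b q (n+1) j * H (n+1-j)
            + (1-q^(n+1-j)) * ascC b q (n+1) j * H (n-j)))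
        - (∑ j ∈ Finset.range (n+2), (a+b)*q^(n+1) * (ascC b q (n+1) j * H (n+1-j)))
        - (∑ j ∈ Finset.range (n+2),
            (q^j * ascC b q (n+1) j * H (n+2-j) - b * (q^j * ascC b q (n+1) j * H (n+1-j)))) := by
    rw [Finset.sum_sub_distrib, Finset.sum_sub_distrib]
  have hA : ∑ j ∈ Finset.range (n+2), (1-q^j) * ascC b q (n+1) j * H (n+2-j)
      = ∑ j ∈ Finset.range (n+1), (1-q^(j+1)) * ascC b q (n+1) (j+1) * H (n+1-j) := by
    rw [show n+2 = (n+1)+1 from rfl,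
      Finset.sum_range_succ' (fun j => (1-q^j) * ascC b q (n+1) j * H ((n+1)+1-j)) (n+1)]
    simp only [pow_zero, sub_self, zero_mul]
    rw [add_zero]
    refine Finset.sum_congr rfl (fun j hj => ?_)
    rw [show (n+1)+1-(j+1) = n+1-j from by omega]
  have hB : ∑ j ∈ Finset.range (n+2),
        (a*q^(n+1-j) - a*q^(n+1) - b*q^(n+1) + b*q^j) * ascC b q (n+1) j * H (n+1-j)
      = (∑ j ∈ Finset.range (n+1),
          (a*q^(n+1-j) - a*q^(n+1) - b*q^(n+1) + b*q^j) * ascC b q (n+1) j * H (n+1-j))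
        + (a - a*q^(n+1)) * ascC b q (n+1) (n+1) * H 0 := by
    rw [show n+2 = (n+1)+1 from rfl, Finset.sum_range_succ]
    rw [show n+1-(n+1) = 0 from by omega]
    rw [pow_zero]
    ring
  have hC : ∑ j ∈ Finset.range (n+2), (1-q^(n+1-j)) * ascC b q (n+1) j * H (n-j)
      = ∑ j ∈ Finset.range (n+1), (1-q^(n+1-j)) * ascC b q (n+1) j * H (n-j) := by
    rw [show n+2 = (n+1)+1 from rfl, Finset.sum_range_succ]
    rw [show n+1-(n+1) = 0 from by omega, pow_zero]
    ring
  have hmerge : ∑ j ∈ Finset.range (n+1),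
        ((1-q^(j+1)) * ascC b q (n+1) (j+1) * H (n+1-j)
          + (a*q^(n+1-j) - a*q^(n+1) - b*q^(n+1) + b*q^j) * ascC b q (n+1) j * H (n+1-j))
      = (∑ j ∈ Finset.range (n+1), (1-q^(j+1)) * ascC b q (n+1) (j+1) * H (n+1-j))
        + (∑ j ∈ Finset.range (n+1),
            (a*q^(n+1-j) - a*q^(n+1) - b*q^(n+1) + b*q^j) * ascC b q (n+1) j * H (n+1-j)) :=
    Finset.sum_add_distrib
  have hM : ∑ j ∈ Finset.range (n+1),
        ((1-q^(j+1)) * ascC b q (n+1) (j+1) * H (n+1-j)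
          + (a*q^(n+1-j) - a*q^(n+1) - b*q^(n+1) + b*q^j) * ascC b q (n+1) j * H (n+1-j))
      = (∑ j ∈ Finset.range (n+1),
          ((1-q^(j+2)) * ascC b q (n+1) (j+2)
            + (a*q^(n+1-(j+1)) - a*q^(n+1) - b*q^(n+1) + b*q^(j+1)) * ascC b q (n+1) (j+1)) * H (n-j))
        - (a - a*q^(n+1)) * ascC b q (n+1) (n+1) * H 0 := by
    rw [Finset.sum_range_succ'
      (fun j => (1-q^(j+1)) * ascC b q (n+1) (j+1) * H (n+1-j)
        + (a*q^(n+1-j) - a*q^(n+1) - b*q^(n+1) + b*q^j) * ascC b q (n+1) j * H (n+1-j)) n]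
    have hg0 : (1-q^(0+1)) * ascC b q (n+1) (0+1) * H (n+1-0)
        + (a*q^(n+1-0) - a*q^(n+1) - b*q^(n+1) + b*q^0) * ascC b q (n+1) 0 * H (n+1-0) = 0 := by
      rw [ascC_zero]
      rw [show (0:ℕ)+1 = 1 from rfl]
      rw [show n+1-0 = n+1 from by omega, pow_zero]
      have ha := gaussBinom_absorb' q n 0
      rw [gaussBinom_zero] at ha
      rw [show (0:ℕ)+1 = 1 from rfl] at ha
      unfold ascC
      rw [ascU_one]
      linear_combination (-(b * H (n+1))) * ha
    rw [hg0, add_zero]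
    rw [Finset.sum_range_succ
      (fun j => ((1-q^(j+2)) * ascC b q (n+1) (j+2)
        + (a*q^(n+1-(j+1)) - a*q^(n+1) - b*q^(n+1) + b*q^(j+1)) * ascC b q (n+1) (j+1)) * H (n-j)) n]
    rw [ascC_eq_zero b q (show n+1 < n+2 from by omega)]
    rw [show n+1-(n+1) = 0 from by omega, show n-n = 0 from by omega, pow_zero]
    have hcong : ∀ j ∈ Finset.range n,
        (1-q^(j+1+1)) * ascC b q (n+1) (j+1+1) * H (n+1-(j+1))
          + (a*q^(n+1-(j+1)) - a*q^(n+1) - b*q^(n+1) + b*q^(j+1)) * ascC b q (n+1) (j+1) * H (n+1-(j+1))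
        = ((1-q^(j+2)) * ascC b q (n+1) (j+2)
            + (a*q^(n+1-(j+1)) - a*q^(n+1) - b*q^(n+1) + b*q^(j+1)) * ascC b q (n+1) (j+1)) * H (n-j) := by
      intro j hj
      rw [show j+1+1 = j+2 from rfl, show n+1-(j+1) = n-j from by omega]
      ring
    rw [Finset.sum_congr rfl hcong]
    ring
  have hmerge2 : ∑ j ∈ Finset.range (n+1),
        (((1-q^(j+2)) * ascC b q (n+1) (j+2)
            + (a*q^(n+1-(j+1)) - a*q^(n+1) - b*q^(n+1) + b*q^(j+1)) * ascC b q (n+1) (j+1)) * H (n-j)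
          + (1-q^(n+1-j)) * ascC b q (n+1) j * H (n-j))
      = (∑ j ∈ Finset.range (n+1),
          ((1-q^(j+2)) * ascC b q (n+1) (j+2)
            + (a*q^(n+1-(j+1)) - a*q^(n+1) - b*q^(n+1) + b*q^(j+1)) * ascC b q (n+1) (j+1)) * H (n-j))
        + (∑ j ∈ Finset.range (n+1), (1-q^(n+1-j)) * ascC b q (n+1) j * H (n-j)) :=
    Finset.sum_add_distrib
  have hF : ∑ j ∈ Finset.range (n+1),
        (((1-q^(j+2)) * ascC b q (n+1) (j+2)
            + (a*q^(n+1-(j+1)) - a*q^(n+1) - b*q^(n+1) + b*q^(j+1)) * ascC b q (n+1) (j+1)) * H (n-j)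
          + (1-q^(n+1-j)) * ascC b q (n+1) j * H (n-j))
      = ∑ j ∈ Finset.range (n+1), (1-a*b*q^n)*(1-q^(n+1)) * (ascC b q n j * H (n-j)) := by
    refine Finset.sum_congr rfl (fun j hj => ?_)
    have hjn : j ≤ n := by
      have := Finset.mem_range.mp hj; omega
    have hkey := asc_key' a b q n j hjn
    rw [show n+1-(j+1) = n-j from by omega]
    linear_combination (H (n-j)) * hkey
  linear_combination -hper2 - hc + hper + hsplit + hA + hB + hC - hmerge + hM - hmerge2 + hF - hb


/-- `Q_n(x|a,b,q) = ∑_{j=0}^n [n choose j]_q (-1)^j b^j q^{j(j-1)/2} h_{n-j}(x|a,q)`. -/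
theorem alSalamChihara_eq_sum_bigQHermite (n : ℕ) (x a b q : ℂ) :
    alSalamChihara q a b x n =
      ∑ j ∈ Finset.range (n + 1),
        gaussBinom q n j * (-1) ^ j * b ^ j * q ^ (j * (j - 1) / 2) *
          bigQHermite q a x (n - j) := by
  have hconv : ∀ m : ℕ,
      (∑ j ∈ Finset.range (m+1),
        gaussBinom q m j * (-1)^j * b^j * q^(j*(j-1)/2) * bigQHermite q a x (m-j))
      = ∑ j ∈ Finset.range (m+1), ascC b q m j * bigQHermite q a x (m-j) :=
    fun m => Finset.sum_congr rfl (fun j _ => by unfold ascC ascU; ring)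
  induction n using Nat.twoStepInduction with
  | zero =>
    rw [Finset.sum_range_one]
    show (1:ℂ) = gaussBinom q 0 0 * (-1)^0 * b^0 * q^(0*(0-1)/2) * bigQHermite q a x (0-0)
    rw [gaussBinom_zero]
    show (1:ℂ) = 1 * (-1)^0 * b^0 * q^(0*(0-1)/2) * 1
    norm_num
  | one =>
    rw [Finset.sum_range_succ, Finset.sum_range_one]
    show 2*x - (a+b) = gaussBinom q 1 0 * (-1)^0 * b^0 * q^(0*(0-1)/2) * bigQHermite q a x (1-0)
      + gaussBinom q 1 1 * (-1)^1 * b^1 * q^(1*(1-1)/2) * bigQHermite q a x (1-1)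
    rw [gaussBinom_zero]
    have hg : gaussBinom q 1 1 = 1 := by
      rw [gaussBinom_succ]
      show gaussBinom q 0 0 + q^1 * (0:ℂ) = 1
      rw [gaussBinom_zero]; ring
    rw [hg]
    show 2*x - (a+b) = 1 * (-1)^0 * b^0 * q^(0*(0-1)/2) * (2*x-a) + 1 * (-1)^1 * b^1 * q^(1*(1-1)/2) * 1
    norm_num
    ring
  | more n ih1 ih2 =>
    show (2*x - (a+b)*q^(n+1)) * alSalamChihara q a b x (n+1)
        - (1 - a*b*q^n) * (1 - q^(n+1)) * alSalamChihara q a b x n = _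
    rw [ih1, ih2, hconv n, hconv (n+1), hconv (n+2)]
    exact key_step x a b q n
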